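/- The infinite cyclic group (Multiplicative ℤ) is equationally Artinian (in the Diophantine sense, with coefficients from the group itself). -/
import Mathlib

/-- The Diophantine radical `Rad_H(E)` of a subset `E ⊆ Hⁿ` (coefficients from `H` itself). -/
def RadH (H : Type*) [Group H] {n : ℕ} (E : Set (Fin n → H)) :
    Set (Monoid.Coprod H (FreeGroup (Fin n))) :=
  {w | ∀ e ∈ E, Monoid.Coprod.lift (MonoidHom.id H) (FreeGroup.lift e) w = 1}

/-- A group is equationally Artinian (Diophantine sense). -/
def EquationallyArtinian (H : Type*) [Group H] : Prop :=
  ∀ (n : ℕ) (E : Set (Fin n → H)), ∃ E₀ ⊆ E, E₀.Finite ∧ RadH H E₀ = RadH H E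

namespace ICEA

open Monoid Submodule

/-- If the span of a set is finitely generated, then a finite subset spans the same submodule. -/
lemma exists_finite_subset_span {R M : Type*} [CommRing R] [AddCommGroup M] [Module R M]
    (s : Set M) (h : (span R s).FG) :
    ∃ t ⊆ s, t.Finite ∧ span R t = span R s := by
  obtain ⟨F, hF⟩ := h
  have hx : ∀ x : F, ∃ T : Finset M, ↑T ⊆ s ∧ (x : M) ∈ span R (T : Set M) := by
    intro x
    exact mem_span_finite_of_mem_span (by rw [← hF]; exact subset_span x.2)
  choose T hT1 hT2 using hx
  refine ⟨⋃ x : F, (T x : Set M), Set.iUnion_subset fun x => hT1 x,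
    Set.finite_iUnion fun x => (T x).finite_toSet, le_antisymm
      (span_mono (Set.iUnion_subset fun x => hT1 x)) ?_⟩
  rw [← hF, span_le]
  intro x hxF
  exact span_mono (Set.subset_iUnion (fun x : F => (T x : Set M)) ⟨x, hxF⟩) (hT2 ⟨x, hxF⟩)

variable (n : ℕ)

abbrev M := ℤ × (Fin n → ℤ)

/-- Pairing `⟨u, v⟩ = u₁v₁ + Σ u₂ᵢ v₂ᵢ`, linear in the second argument. -/
def pairL (u : M n) : M n →ₗ[ℤ] ℤ where
  toFun v := u.1 * v.1 + ∑ i, u.2 i * v.2 i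
  map_add' v w := by
    simp only [Prod.fst_add, Prod.snd_add, Pi.add_apply, mul_add, Finset.sum_add_distrib]
    ring
  map_smul' m v := by
    simp only [Prod.smul_fst, Prod.smul_snd, Pi.smul_apply, smul_eq_mul, RingHom.id_apply]
    rw [mul_add, Finset.mul_sum]
    congr 1
    · ring
    · exact Finset.sum_congr rfl fun i _ => by ring

lemma pairL_comm (u v : M n) : pairL n u v = pairL n v u := by
  simp only [pairL, LinearMap.coe_mk, AddHom.coe_mk]
  rw [mul_comm]
  congr 1
  exact Finset.sum_congr rfl fun i _ => by ring

/-- The abelianized "vector of exponents plus constant" homomorphism. -/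
def toVec : Coprod (Multiplicative ℤ) (FreeGroup (Fin n)) →* Multiplicative (M n) :=
  Coprod.lift
    (AddMonoidHom.toMultiplicative (LinearMap.inl ℤ ℤ (Fin n → ℤ)).toAddMonoidHom)
    (FreeGroup.lift fun i => Multiplicative.ofAdd ((0, Pi.single i 1) : M n))

/-- The vector associated to a point `e ∈ Hⁿ`. -/
def gvec (e : Fin n → Multiplicative ℤ) : M n := (1, fun i => (e i).toAdd)

/-- Evaluation at `e` as a monoid hom on `Multiplicative (M n)`. -/
def evalE (e : Fin n → Multiplicative ℤ) : Multiplicative (M n) →* Multiplicative ℤ :=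
  AddMonoidHom.toMultiplicative (pairL n (gvec n e)).toAddMonoidHom

lemma lift_eq (e : Fin n → Multiplicative ℤ) :
    Coprod.lift (MonoidHom.id (Multiplicative ℤ)) (FreeGroup.lift e)
      = (evalE n e).comp (toVec n) := by
  apply Coprod.hom_ext
  · ext c
    simp [evalE, toVec, gvec, pairL, Coprod.lift_apply_inl]
  · rw [MonoidHom.comp_assoc]
    ext i
    simp [evalE, toVec, gvec, pairL, Pi.single_apply, mul_ite, Coprod.lift_apply_inr]

end ICEA

/-- The infinite cyclic group is equationally Artinian. -/
theorem infiniteCyclic_equationallyArtinian :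
    EquationallyArtinian (Multiplicative ℤ) := by
  intro n E
  classical
  set g : (Fin n → Multiplicative ℤ) → ICEA.M n := ICEA.gvec n with hg
  have hfg : (Submodule.span ℤ (g '' E)).FG :=
    IsNoetherian.noetherian _
  obtain ⟨t, hts, htf, htspan⟩ := ICEA.exists_finite_subset_span (g '' E) hfg
  obtain ⟨E₀, hE₀E, hE₀img⟩ := Set.subset_image_iff.mp hts
  refine ⟨E₀, hE₀E, ?_, ?_⟩
  · -- E₀ finite
    have hginj : Function.Injective g := by
      intro a b hab
      funext i
      have := congrFun (congrArg Prod.snd hab) i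
      exact Multiplicative.toAdd.injective this
    exact Set.Finite.of_finite_image (hE₀img ▸ htf) hginj.injOn
  · apply Set.Subset.antisymm
    · -- Rad E₀ ⊆ Rad E
      intro w hw e heE
      rw [ICEA.lift_eq]
      have hmem : g e ∈ Submodule.span ℤ (g '' E₀) := by
        rw [hE₀img, htspan]
        exact Submodule.subset_span ⟨e, heE, rfl⟩
      set u : ICEA.M n := (ICEA.toVec n w).toAdd with hu
      have hker : Submodule.span ℤ (g '' E₀) ≤ LinearMap.ker (ICEA.pairL n u) := by
        rw [Submodule.span_le]
        rintro _ ⟨e', he', rfl⟩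
        have := hw e' he'
        rw [ICEA.lift_eq] at this
        have h0 : ICEA.pairL n (ICEA.gvec n e') u = 0 := this
        simpa [LinearMap.mem_ker, ICEA.pairL_comm n u] using h0
      have := hker hmem
      rw [LinearMap.mem_ker] at this
      show ICEA.pairL n (ICEA.gvec n e) u = (1 : Multiplicative ℤ)
      rw [ICEA.pairL_comm]
      exact this
    · -- Rad E ⊆ Rad E₀ (antitone)
      intro w hw e heE₀
      exact hw e (hE₀E heE₀)
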